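/- Attaching trees of dimension at most m to the leaves of a tree of dimension at most m yields a tree of dimension at most 2m: if dim(t') ≤ m and dim(tᵢ) ≤ m for all i, then dim(t'[t₁,...,tₙ]) ≤ 2m. -/

import Mathlib

inductive RTree where
  | node : List RTree → RTree

/-- Dimension of a finite rooted tree: a leaf has dimension 0; a node with one
child has the dimension of that child; a node with at least two children has
dimension `d₁ + 1` if the two largest child dimensions `d₁ ≥ d₂` are equal,
and `d₁` otherwise. -/
def RTree.dim : RTree → ℕ
  | .node [] => 0
  | .node [t] => t.dim
  | .node ts =>
      let ds := ts.attach.map fun t => t.1.dim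
      let d1 := ds.foldr max 0
      let d2 := (ds.erase d1).foldr max 0
      if d1 = d2 then d1 + 1 else d1
decreasing_by
  · simp; omega
  · have := List.sizeOf_lt_of_mem t.2; simp at this ⊢; omega

mutual
/-- `Graft t' ts t` holds if `t` is obtained from `t'` by replacing its leaves,
in left-to-right order, by the trees in the list `ts` (i.e. `t = t'[t₁,…,tₙ]`). -/
inductive Graft : RTree → List RTree → RTree → Prop where
  | leaf (t : RTree) : Graft (.node []) [t] t
  | node {cs : List RTree} {ts : List RTree} {cs' : List RTree} :
      cs ≠ [] → GraftList cs ts cs' → Graft (.node cs) ts (.node cs')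

/-- Grafting performed on a list of trees, splitting the supply of attached trees. -/
inductive GraftList : List RTree → List RTree → List RTree → Prop where
  | nil : GraftList [] [] []
  | cons {c c' : RTree} {cs cs' : List RTree} {ts ts' : List RTree} :
      Graft c ts c' → GraftList cs ts' cs' → GraftList (c :: cs) (ts ++ ts') (c' :: cs')
end


def D1 (l : List ℕ) : ℕ := l.foldr max 0
def D2 (l : List ℕ) : ℕ := (l.erase (D1 l)).foldr max 0
def nodeDim (l : List ℕ) : ℕ := if D1 l = D2 l then D1 l + 1 else D1 l

lemma mem_le_D1 {a : ℕ} {l : List ℕ} (h : a ∈ l) : a ≤ D1 l := by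
  induction l with
  | nil => simp at h
  | cons b t ih =>
    rcases List.mem_cons.1 h with rfl | h
    · exact le_max_left _ _
    · exact (ih h).trans (le_max_right _ _)

lemma D1_le {c : ℕ} {l : List ℕ} (h : ∀ a ∈ l, a ≤ c) : D1 l ≤ c := by
  induction l with
  | nil => exact Nat.zero_le _
  | cons b t ih =>
    exact max_le (h b (by simp)) (ih fun a ha => h a (by simp [ha]))

lemma D1_mem {l : List ℕ} (h : l ≠ []) : D1 l ∈ l := by
  induction l with
  | nil => simp at h
  | cons b t ih =>
    rcases eq_or_ne t [] with rfl | ht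
    · simp [D1]
    · show max b (D1 t) ∈ _
      rcases max_cases b (D1 t) with ⟨h1, _⟩ | ⟨h1, _⟩ <;> rw [h1]
      · simp
      · exact List.mem_cons_of_mem _ (ih ht)

lemma D2_le_D1 (l : List ℕ) : D2 l ≤ D1 l :=
  D1_le fun a ha => mem_le_D1 (List.erase_subset ha)

lemma le_D1_of_countP {v : ℕ} {l : List ℕ} (h : 0 < l.countP (fun a => v ≤ a)) :
    v ≤ D1 l := by
  obtain ⟨a, ha, hv⟩ := List.countP_pos_iff.1 h
  exact le_trans (by simpa using hv) (mem_le_D1 ha)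

lemma le_D2_of_countP {v : ℕ} {l : List ℕ} (h : 2 ≤ l.countP (fun a => v ≤ a)) :
    v ≤ D2 l := by
  apply le_D1_of_countP (l := l.erase (D1 l))
  by_cases hm : D1 l ∈ l
  · have hp := (List.perm_cons_erase hm).countP_eq (fun a => decide (v ≤ a))
    rw [List.countP_cons] at hp
    split at hp <;> omega
  · rw [List.erase_of_not_mem hm]; omega

lemma countP_le_D2 {v : ℕ} {l : List ℕ} (hv : 0 < v) (h : v ≤ D2 l) :
    2 ≤ l.countP (fun a => v ≤ a) := by
  have he : l.erase (D1 l) ≠ [] := by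
    intro h0
    rw [D2, h0] at h; simp [D1] at h; omega
  have hmem2 : D2 l ∈ l.erase (D1 l) := D1_mem he
  have hml : l ≠ [] := by rintro rfl; simp at he
  have hm : D1 l ∈ l := D1_mem hml
  have hp := (List.perm_cons_erase hm).countP_eq (fun a => decide (v ≤ a))
  rw [List.countP_cons] at hp
  have h1 : v ≤ D1 l := h.trans (D2_le_D1 l)
  have h2 : 1 ≤ (l.erase (D1 l)).countP (fun a => decide (v ≤ a)) := by
    rw [List.one_le_countP_iff]
    exact ⟨D2 l, hmem2, by simpa using h⟩
  simp [h1] at hp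
  omega

lemma one_le_nodeDim (l : List ℕ) : 1 ≤ nodeDim l := by
  rw [nodeDim]
  split
  · omega
  · rename_i hne
    have := D2_le_D1 l
    by_contra h
    have : D1 l = 0 := by omega
    have : D2 l = 0 := by have := D2_le_D1 l; omega
    omega

lemma D1_le_nodeDim (l : List ℕ) : D1 l ≤ nodeDim l := by
  rw [nodeDim]; split <;> omega

lemma D2_lt_nodeDim (l : List ℕ) : D2 l < nodeDim l := by
  rw [nodeDim]
  have := D2_le_D1 l
  split <;> omega

lemma countP_transfer {m v : ℕ} {ds ds' : List ℕ}
    (H : List.Forall₂ (fun a b => b ≤ a + m) ds ds') :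
    ds'.countP (fun b => v + m ≤ b) ≤ ds.countP (fun a => v ≤ a) := by
  induction H with
  | nil => simp
  | cons hab htl ih =>
    rw [List.countP_cons, List.countP_cons]
    split <;> split <;> rename_i h1 h2 <;> simp_all <;> omega

lemma nodeDim_mono {m : ℕ} {ds ds' : List ℕ}
    (H : List.Forall₂ (fun a b => b ≤ a + m) ds ds') :
    nodeDim ds' ≤ nodeDim ds + m := by
  by_cases htriv : nodeDim ds' ≤ m
  · omega
  push_neg at htriv
  have hnd := one_le_nodeDim ds
  have hd2lt := D2_lt_nodeDim ds
  have hd1le := D1_le_nodeDim ds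
  rw [nodeDim] at htriv
  rw [nodeDim]
  split at htriv
  · rename_i heq
    rw [if_pos heq]
    by_cases hle : D1 ds' ≤ m
    · omega
    push_neg at hle
    have hc2 : 2 ≤ ds'.countP (fun b => D1 ds' ≤ b) :=
      countP_le_D2 (by omega) (heq ▸ le_refl _)
    have hc2' : 2 ≤ ds.countP (fun a => (D1 ds' - m) ≤ a) := by
      have := countP_transfer (v := D1 ds' - m) H
      have hrw : D1 ds' - m + m = D1 ds' := by omega
      rw [hrw] at this
      omega
    have hD2 : D1 ds' - m ≤ D2 ds := le_D2_of_countP hc2'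
    omega
  · rename_i hne
    rw [if_neg hne]
    have hne' : ds' ≠ [] := by
      rintro rfl
      simp [D1] at htriv
    have hc1 : 0 < ds'.countP (fun b => D1 ds' ≤ b) := by
      rw [List.countP_pos_iff]
      exact ⟨D1 ds', D1_mem hne', by simp⟩
    have hc1' : 0 < ds.countP (fun a => (D1 ds' - m) ≤ a) := by
      have := countP_transfer (v := D1 ds' - m) H
      have hrw : D1 ds' - m + m = D1 ds' := by omega
      rw [hrw] at this
      omega
    have := le_D1_of_countP hc1'
    omega

lemma dim_node_single (c : RTree) : RTree.dim (.node [c]) = c.dim := by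
  rw [RTree.dim]

lemma dim_node_two (a b : RTree) (r : List RTree) :
    RTree.dim (.node (a :: b :: r)) = nodeDim ((a :: b :: r).map RTree.dim) := by
  rw [RTree.dim]
  · simp only [nodeDim, D1, D2, List.attach_map_val]
    rfl
  · simp
  · simp

lemma forall₂_dim {m : ℕ} {cs cs' : List RTree}
    (h : List.Forall₂ (fun a b => b.dim ≤ a.dim + m) cs cs') :
    List.Forall₂ (fun a b => b ≤ a + m) (cs.map RTree.dim) (cs'.map RTree.dim) := by
  induction h with
  | nil => simp
  | cons hab _ ih =>
    rw [List.map_cons, List.map_cons]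
    exact List.Forall₂.cons hab ih

lemma graft_dim_le (m : ℕ) (t' : RTree) (ts : List RTree) (t : RTree) (h : Graft t' ts t) :
    (∀ u ∈ ts, u.dim ≤ m) → t.dim ≤ t'.dim + m := by
  induction h using Graft.rec
    (motive_2 := fun cs ts cs' _ => (∀ u ∈ ts, u.dim ≤ m) →
      List.Forall₂ (fun a b => b.dim ≤ a.dim + m) cs cs') with
  | leaf t =>
    intro hts
    have h0 : RTree.dim (.node []) = 0 := by rw [RTree.dim]
    rw [h0]
    simpa using hts t (by simp)
  | node hne _ ih =>
    intro hts
    have hf := ih hts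
    cases hf with
    | nil => exact absurd rfl hne
    | cons h1 htl =>
      cases htl with
      | nil =>
        rw [dim_node_single, dim_node_single]
        exact h1
      | cons h2 htl2 =>
        rw [dim_node_two, dim_node_two]
        exact nodeDim_mono (forall₂_dim (List.Forall₂.cons h1 (List.Forall₂.cons h2 htl2)))
  | nil => exact List.Forall₂.nil
  | cons hg hgl ih1 ih2 =>
    rename_i hts
    refine List.Forall₂.cons ?_ ?_
    · exact ih1 fun u hu => hts u (by simp [hu])
    · exact ih2 fun u hu => hts u (by simp [hu])

/-- Attaching trees of dimension at most `m` to the leaves of a tree of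
dimension at most `m` yields a tree of dimension at most `2m`. -/
theorem graft_dim_upper_bound (t' t : RTree) (ts : List RTree) (m : ℕ)
    (h : Graft t' ts t) (h' : t'.dim ≤ m) (hts : ∀ u ∈ ts, u.dim ≤ m) :
    t.dim ≤ 2 * m := by
  have h1 := graft_dim_le m t' ts t h hts
  omega
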